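/- Let H be an inner product space and x_1,…,x_n ∈ H. With the forward differences Δx_k := x_{k+1} − x_k for k = 1,…,n−1, one has (∑_{i=1}^n ‖x_i‖)² ≤ ‖∑_{i=1}^n x_i‖² + (n(n−1)/2) (∑_{k=1}^{n−1} ‖Δx_k‖)². -/

import Mathlib

open Finset RCLike

theorem stmt_10 {𝕜 H : Type*} [RCLike 𝕜] [NormedAddCommGroup H] [InnerProductSpace 𝕜 H]
    (n : ℕ) (x : ℕ → H) :
    (∑ i ∈ Finset.Icc 1 n, ‖x i‖) ^ 2 ≤ ‖∑ i ∈ Finset.Icc 1 n, x i‖ ^ 2 +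
      ((n : ℝ) * (n - 1) / 2) *
        (∑ k ∈ Finset.Icc 1 (n - 1), ‖x (k + 1) - x k‖) ^ 2 := by
  rcases Nat.eq_zero_or_pos n with hn | hn
  · subst hn; simp
  set S : ℝ := ∑ k ∈ Finset.Icc 1 (n - 1), ‖x (k + 1) - x k‖ with hS
  have hS0 : 0 ≤ S := Finset.sum_nonneg fun _ _ => norm_nonneg _
  set T := Finset.Icc 1 n with hT
  have key : ∀ i ∈ T, ∀ j ∈ T, ‖x i - x j‖ ≤ S := by
    have main : ∀ i j, 1 ≤ i → i ≤ j → j ≤ n → ‖x j - x i‖ ≤ S := by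
      intro i j hi hij hjn
      have htel : ∑ k ∈ Finset.Ico i j, (x (k+1) - x k) = x j - x i := by
        rw [Finset.sum_Ico_eq_sub _ hij, Finset.sum_range_sub, Finset.sum_range_sub]
        abel
      calc ‖x j - x i‖ = ‖∑ k ∈ Finset.Ico i j, (x (k+1) - x k)‖ := by rw [htel]
        _ ≤ ∑ k ∈ Finset.Ico i j, ‖x (k+1) - x k‖ := norm_sum_le _ _
        _ ≤ S := by
            refine Finset.sum_le_sum_of_subset_of_nonneg ?_ (fun _ _ _ => norm_nonneg _)
            intro k hk
            simp only [Finset.mem_Ico, Finset.mem_Icc] at *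
            exact ⟨le_trans hi hk.1, Nat.le_sub_one_of_lt (lt_of_lt_of_le hk.2 hjn)⟩
    intro i hi j hj
    simp only [hT, Finset.mem_Icc] at hi hj
    rcases le_total i j with h | h
    · rw [norm_sub_rev]; exact main i j hi.1 h hj.2
    · exact main j i hj.1 h hi.2
  have step : ∀ i ∈ T, ∀ j ∈ T,
      ‖x i‖ * ‖x j‖ ≤ re ((inner 𝕜 (x i) (x j) : 𝕜)) + (if i = j then (0:ℝ) else S^2/2) := by
    intro i hi j hj
    by_cases hij : i = j
    · subst hij
      simp [inner_self_eq_norm_mul_norm (𝕜 := 𝕜), sq]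
    · simp only [hij, if_false]
      have h1 : ‖x i - x j‖ ^ 2 = ‖x i‖ ^ 2 - 2 * re ((inner 𝕜 (x i) (x j) : 𝕜)) + ‖x j‖ ^ 2 :=
        norm_sub_sq (𝕜 := 𝕜) _ _
      have h2 : ‖x i - x j‖ ^ 2 ≤ S ^ 2 :=
        pow_le_pow_left₀ (norm_nonneg _) (key i hi j hj) 2
      nlinarith [sq_nonneg (‖x i‖ - ‖x j‖)]
  have expand : ‖∑ i ∈ T, x i‖ ^ 2 = ∑ i ∈ T, ∑ j ∈ T, re ((inner 𝕜 (x i) (x j) : 𝕜)) := by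
    rw [sq, ← inner_self_eq_norm_mul_norm (𝕜 := 𝕜), sum_inner]
    simp [inner_sum, map_sum]
  have hcard : (T.card : ℝ) = n := by simp [hT]
  calc (∑ i ∈ T, ‖x i‖) ^ 2 = ∑ i ∈ T, ∑ j ∈ T, ‖x i‖ * ‖x j‖ := by
        rw [sq, Finset.sum_mul_sum]
    _ ≤ ∑ i ∈ T, ∑ j ∈ T, (re ((inner 𝕜 (x i) (x j) : 𝕜)) + (if i = j then (0:ℝ) else S^2/2)) := by
        refine Finset.sum_le_sum fun i hi => Finset.sum_le_sum fun j hj => step i hi j hj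
    _ = ‖∑ i ∈ T, x i‖ ^ 2 + ∑ i ∈ T, ∑ j ∈ T, (if i = j then (0:ℝ) else S^2/2) := by
        rw [expand, ← Finset.sum_add_distrib]
        congr 1
        ext i
        rw [← Finset.sum_add_distrib]
    _ ≤ ‖∑ i ∈ T, x i‖ ^ 2 + ((n : ℝ) * (n - 1) / 2) * S ^ 2 := by
        refine add_le_add_right ?_ _
        have hrow : ∀ i ∈ T, (∑ j ∈ T, if i = j then (0:ℝ) else S^2/2)
            = ((n:ℝ) - 1) * (S^2/2) := by
          intro i hi
          have hsplit : ∀ j, (if i = j then (0:ℝ) else S^2/2)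
              = S^2/2 - (if i = j then S^2/2 else 0) := by
            intro j; by_cases h : i = j <;> simp [h]
          simp_rw [hsplit]
          rw [Finset.sum_sub_distrib, Finset.sum_const, Finset.sum_ite_eq, if_pos hi]
          simp only [hT, Nat.card_Icc, Nat.add_sub_cancel, nsmul_eq_mul]
          ring
        rw [Finset.sum_congr rfl hrow, Finset.sum_const]
        simp only [hT, Nat.card_Icc, Nat.add_sub_cancel, nsmul_eq_mul]
        ring_nf
        exact le_rfl
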